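/- There exist constants C > 0 and θ₀ > 0 such that for all θ ∈ (0, θ₀), defining φ by (1 - tan φ)·cos(φ + θ) = 1 - sin(φ + θ), ψ by 1 - tan(ψ + θ) = cos(φ + θ) - (1 - tan φ)·sin(φ + θ), and θ' by sec ψ - 1 + tan ψ = tan(ψ + θ') (all angles in (0, π/4)), one has 0 ≤ θ - θ' ≤ C·φ³. -/

import Mathlib

open Real

lemma aux_tan_add (x y : ℝ) (hx : Real.cos x ≠ 0) (hy : Real.cos y ≠ 0)
    (hxy : Real.cos (x+y) ≠ 0) :
    Real.tan (x+y) * (1 - Real.tan x * Real.tan y) = Real.tan x + Real.tan y := by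
  rw [Real.tan_eq_sin_div_cos, Real.tan_eq_sin_div_cos, Real.tan_eq_sin_div_cos]
  field_simp
  rw [Real.sin_add, Real.cos_add]
  ring

lemma aux_half_sin (x : ℝ) (hc : Real.cos (x/2) ≠ 0) :
    Real.sin x * (1 + Real.tan (x/2)^2) = 2 * Real.tan (x/2) := by
  have h1 : Real.sin x = 2 * Real.sin (x/2) * Real.cos (x/2) := by
    rw [← Real.sin_two_mul]; congr 1; ring
  have hp := Real.sin_sq_add_cos_sq (x/2)
  rw [Real.tan_eq_sin_div_cos]
  field_simp
  linear_combination h1 + Real.sin x * hp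

lemma aux_half_cos (x : ℝ) (hc : Real.cos (x/2) ≠ 0) :
    Real.cos x * (1 + Real.tan (x/2)^2) = 1 - Real.tan (x/2)^2 := by
  have h1 : Real.cos x = 2 * Real.cos (x/2)^2 - 1 := by
    have h := Real.cos_two_mul (x/2); rwa [show 2*(x/2) = x by ring] at h
  have hp := Real.sin_sq_add_cos_sq (x/2)
  rw [Real.tan_eq_sin_div_cos]
  field_simp
  nlinarith [h1, hp]
  --PRINT

lemma aux_tan_half_le (x : ℝ) (h0 : 0 ≤ x) (h1 : x ≤ 1) : Real.tan (x/2) ≤ x := by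
  have hpi := Real.pi_gt_three
  have hc' : Real.cos (π/3) ≤ Real.cos (x/2) :=
    Real.cos_le_cos_of_nonneg_of_le_pi (by linarith) (by linarith) (by linarith)
  rw [Real.cos_pi_div_three] at hc'
  have hcpos : 0 < Real.cos (x/2) := by linarith
  have hs : Real.sin (x/2) ≤ x/2 := Real.sin_le (by linarith)
  rw [Real.tan_eq_sin_div_cos, div_le_iff₀ hcpos]
  nlinarith [mul_le_mul_of_nonneg_left hc' h0]

lemma aux_tan_sub_ge (x y : ℝ) (hx0 : 0 ≤ x) (hxy : x ≤ y) (hy : y < π/2) :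
    y - x ≤ Real.tan y - Real.tan x := by
  rcases eq_or_lt_of_le hxy with rfl|h
  · simp
  have hpi := Real.pi_gt_three
  have hcx : 0 < Real.cos x := Real.cos_pos_of_mem_Ioo ⟨by linarith, by linarith⟩
  have hcy : 0 < Real.cos y := Real.cos_pos_of_mem_Ioo ⟨by linarith, hy⟩
  have hcz : 0 < Real.cos (y - x) := Real.cos_pos_of_mem_Ioo ⟨by linarith, by linarith⟩
  have key : Real.tan y - Real.tan x = Real.sin (y - x) / (Real.cos x * Real.cos y) := by
    rw [Real.tan_eq_sin_div_cos, Real.tan_eq_sin_div_cos, Real.sin_sub]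
    field_simp
    try ring
    try exact Or.inl trivial
  rw [key, le_div_iff₀ (by positivity)]
  have h1 : (y-x) < Real.tan (y-x) := Real.lt_tan (by linarith) (by linarith)
  rw [Real.tan_eq_sin_div_cos, lt_div_iff₀ hcz] at h1
  have h2 : Real.cos x * Real.cos y ≤ Real.cos (y - x) := by
    rw [Real.cos_sub]
    nlinarith [Real.sin_nonneg_of_nonneg_of_le_pi (x := x) hx0 (by linarith),
      Real.sin_nonneg_of_nonneg_of_le_pi (x := y) (by linarith) (by linarith)]
  nlinarith [mul_le_mul_of_nonneg_left h2 (by linarith : (0:ℝ) ≤ y - x)]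



lemma aux_final (u v s F B : ℝ) (hu0 : 0 < u) (hu45 : u < 4/5)
    (hs0 : 0 < s) (hs45 : s < 4/5) (hv0 : 0 < v)
    (k3 : (F - B) * ((1-u^2)*(1-s)*(1+u*v)*(1-u)) = 8*u^3) :
    B < F ∧ F - B ≤ 1000 * u^3 := by
  set M := (1-u^2)*(1-s)*(1+u*v)*(1-u) with hM_def
  have h1 : (1:ℝ)/5 ≤ 1 - u := by linarith
  have h2 : (1:ℝ)/5 ≤ 1 - s := by linarith
  have h3 : (1:ℝ)/5 ≤ 1 - u^2 := by nlinarith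
  have h4 : (1:ℝ) ≤ 1 + u*v := by nlinarith
  have p1 : (1:ℝ)/25 ≤ (1-u^2)*(1-s) := by nlinarith
  have p2 : (1:ℝ)/25 ≤ (1-u^2)*(1-s)*(1+u*v) := by nlinarith
  have hMlb : (1:ℝ)/125 ≤ M := by rw [hM_def]; nlinarith
  have hMpos : 0 < M := by linarith
  have h8 : 0 < 8*u^3 := by positivity
  have hFBpos : 0 < F - B := by nlinarith [k3]
  have hprod : 0 ≤ (F - B) * (M - 1/125) :=
    mul_nonneg (le_of_lt hFBpos) (by linarith)
  constructor
  · linarith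
  · nlinarith [k3, hprod]

set_option maxHeartbeats 1000000 in
theorem stmt_7 : ∃ C > (0:ℝ), ∃ θ₀ > (0:ℝ), ∀ θ : ℝ, θ ∈ Set.Ioo 0 θ₀ →
    ∀ φ ∈ Set.Ioo (0:ℝ) (Real.pi / 4), ∀ ψ ∈ Set.Ioo (0:ℝ) (Real.pi / 4),
      ∀ θ' ∈ Set.Ioo (0:ℝ) (Real.pi / 4),
      (1 - Real.tan φ) * Real.cos (φ + θ) = 1 - Real.sin (φ + θ) →
      1 - Real.tan (ψ + θ) =
        Real.cos (φ + θ) - (1 - Real.tan φ) * Real.sin (φ + θ) →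
      1 / Real.cos ψ - 1 + Real.tan ψ = Real.tan (ψ + θ') →
      0 ≤ θ - θ' ∧ θ - θ' ≤ C * φ ^ 3 := by
  refine ⟨1000, by norm_num, 1/10, by norm_num, ?_⟩
  rintro θ ⟨hθ0, hθ1⟩ φ ⟨hφ0, hφ4⟩ ψ ⟨hψ0, hψ4⟩ θ' ⟨hθ'0, hθ'4⟩ eq1 eq2 eq3
  have hπ3 : (3:ℝ) < π := Real.pi_gt_three
  have hπ4 : π < 3.15 := by
    have := Real.pi_lt_d2; linarith
  -- basic angle bounds
  have hφ1 : φ < 1 := by linarith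
  have hψ1 : ψ < 1 := by linarith
  have hθsm : θ < 1/10 := hθ1
  -- cos positivity helper
  have cpos : ∀ z : ℝ, 0 ≤ z → z < π/2 → 0 < Real.cos z := fun z h1 h2 =>
    Real.cos_pos_of_mem_Ioo ⟨by linarith, h2⟩
  set u := Real.tan (φ/2) with hu_def
  set v := Real.tan (θ/2) with hv_def
  set t := Real.tan ((φ+θ)/2) with ht_def
  set F := Real.tan φ with hF_def
  have hcφ2 : 0 < Real.cos (φ/2) := cpos _ (by linarith) (by linarith)
  have hcθ2 : 0 < Real.cos (θ/2) := cpos _ (by linarith) (by linarith)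
  have hcφ : 0 < Real.cos φ := cpos _ (by linarith) (by linarith)
  have hcθ : 0 < Real.cos θ := cpos _ (by linarith) (by linarith)
  have hca : 0 < Real.cos (φ+θ) := cpos _ (by linarith) (by linarith)
  have hca2 : 0 < Real.cos ((φ+θ)/2) := cpos _ (by linarith) (by linarith)
  have hcψ : 0 < Real.cos ψ := cpos _ (by linarith) (by linarith)
  have hcψ2 : 0 < Real.cos (ψ/2) := cpos _ (by linarith) (by linarith)
  -- half angle identities for a = φ+θ
  have hsa : Real.sin (φ+θ) * (1 + t^2) = 2*t := aux_half_sin _ hca2.ne'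
  have hcaa : Real.cos (φ+θ) * (1 + t^2) = 1 - t^2 := aux_half_cos _ hca2.ne'
  -- tan positivity and size
  have hu0 : 0 < u := Real.tan_pos_of_pos_of_lt_pi_div_two (by linarith) (by linarith)
  have hv0 : 0 < v := Real.tan_pos_of_pos_of_lt_pi_div_two (by linarith) (by linarith)
  have ht0 : 0 < t := Real.tan_pos_of_pos_of_lt_pi_div_two (by linarith) (by linarith)
  have huφ : u ≤ φ := aux_tan_half_le φ (by linarith) (by linarith)
  have hvθ : v ≤ θ := aux_tan_half_le θ (by linarith) (by linarith)
  have hta : t ≤ φ + θ := aux_tan_half_le (φ+θ) (by linarith) (by linarith)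
  have ht1 : t < 1 := by linarith
  have hu45 : u < 4/5 := by linarith
  -- step 1: derive (1-F)(1+t) = 1-t
  have h5 : (1-F)*(1-t^2) = (1-t)^2 := by
    linear_combination (1+t^2)*eq1 - (1-F)*hcaa - hsa
  have h6 : (1-F)*(1+t) = 1-t := by
    have hne : (1:ℝ) - t ≠ 0 := ne_of_gt (by linarith)
    apply mul_right_cancel₀ hne
    linear_combination h5
  -- tan double/addition relations
  have hF2 : F*(1-u*u) = 2*u := by
    have h := aux_tan_add (φ/2) (φ/2) hcφ2.ne' hcφ2.ne' (by rw [show φ/2+φ/2 = φ by ring]; exact hcφ.ne')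
    rw [show φ/2+φ/2 = φ by ring] at h
    linear_combination h
  have hR1 : t*(1-u*v) = u+v := by
    have h := aux_tan_add (φ/2) (θ/2) hcφ2.ne' hcθ2.ne' (by rw [show φ/2+θ/2 = (φ+θ)/2 by ring]; exact hca2.ne')
    rw [show φ/2+θ/2 = (φ+θ)/2 by ring] at h
    linear_combination h
  have hT : t*(1-u-u^2) = u := by
    linear_combination ((1-u*u)/2)*h6 + ((1+t)/2)*hF2
  have hK : v*(1-u) = u^2*(1+u) := by
    linear_combination (1-u*v)*hT - (1-u-u^2)*hR1
  -- step 2: ψ + θ = φ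
  have h9 : Real.tan (ψ+θ) * Real.cos (φ+θ) = F * Real.cos (φ+θ) := by
    linear_combination (-(Real.cos (φ+θ)))*eq2 + (1+Real.sin (φ+θ))*eq1 -
      Real.sin_sq_add_cos_sq (φ+θ)
  have hpsi : ψ + θ = φ := by
    refine Real.injOn_tan ⟨by linarith, by linarith⟩ ⟨by linarith, by linarith⟩ ?_
    exact mul_right_cancel₀ hca.ne' h9
  -- s relations
  set s := Real.tan (ψ/2) with hs_def
  have hψ2eq : ψ/2 = φ/2 + -(θ/2) := by linarith
  have hs1 : s*(1+u*v) = u - v := by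
    have h := aux_tan_add (φ/2) (-(θ/2)) hcφ2.ne'
      (by rw [Real.cos_neg]; exact hcθ2.ne') (by rw [← hψ2eq]; exact hcψ2.ne')
    rw [← hψ2eq, Real.tan_neg] at h
    linear_combination h
  have hs0 : 0 < s := Real.tan_pos_of_pos_of_lt_pi_div_two (by linarith) (by linarith)
  have hsψ : s ≤ ψ := aux_tan_half_le ψ (by linarith) (by linarith)
  have hs45 : s < 4/5 := by linarith
  -- half angle identities for ψ
  have hsinψ : Real.sin ψ * (1 + s^2) = 2*s := aux_half_sin _ hcψ2.ne'
  have hcosψ : Real.cos ψ * (1 + s^2) = 1 - s^2 := aux_half_cos _ hcψ2.ne'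
  -- B relation
  set B := Real.tan (ψ+θ') with hB_def
  have e3 : 1 - Real.cos ψ + Real.sin ψ = B * Real.cos ψ := by
    have h := eq3
    rw [Real.tan_eq_sin_div_cos] at h
    field_simp at h
    linarith [h]
  have hB2' : B*(1-s^2) = 2*s^2 + 2*s := by
    linear_combination (-B-1)*hcosψ - (1+s^2)*e3 + hsinψ
  have hB2 : B*(1-s) = 2*s := by
    have hne : (1:ℝ) + s ≠ 0 := ne_of_gt (by linarith)
    apply mul_right_cancel₀ hne
    linear_combination hB2'
  -- key algebraic identity
  have k1 : (F - B) * ((1-u^2)*(1-s)) = 2*((u-s) - u*s*(1-u)) := by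
    linear_combination (1-s)*hF2 - (1-u^2)*hB2
  have k2 : (F - B) * ((1-u^2)*(1-s)*(1+u*v)) = 2*(v*(1+u) - u^2*(1-u)) := by
    linear_combination (1+u*v)*k1 + (-2 - 2*u + 2*u^2)*hs1
  have k3 : (F - B) * ((1-u^2)*(1-s)*(1+u*v)*(1-u)) = 8*u^3 := by
    linear_combination (1-u)*k2 + 2*(1+u)*hK
  obtain ⟨hFB, hFBle⟩ := aux_final u v s F B hu0 (by linarith) hs0 (by linarith) hv0 k3
  -- from tan inequality back to angles
  have hx0 : 0 ≤ ψ + θ' := by linarith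
  have hyl : φ < π/2 := by linarith
  have hxy : ψ + θ' ≤ φ := by
    by_contra hcon
    push_neg at hcon
    have : F < B := by
      have := Real.tan_lt_tan_of_nonneg_of_lt_pi_div_two (by linarith : (0:ℝ) ≤ φ)
        (by linarith : ψ + θ' < π/2) hcon
      simpa [← hF_def, ← hB_def] using this
    linarith
  have hdiff : θ - θ' = φ - (ψ + θ') := by linarith
  constructor
  · linarith
  · have hle := aux_tan_sub_ge (ψ+θ') φ hx0 hxy hyl
    have hu3φ : u^3 ≤ φ^3 := by
      have := pow_le_pow_left₀ (le_of_lt hu0) huφ 3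
      simpa using this
    rw [hF_def, hB_def] at hFBle
    rw [hdiff]
    calc φ - (ψ + θ') ≤ Real.tan φ - Real.tan (ψ+θ') := hle
      _ ≤ 1000 * u^3 := hFBle
      _ ≤ 1000 * φ^3 := mul_le_mul_of_nonneg_left hu3φ (by norm_num)
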